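/- Let q be a prime power, k ≥ 2, 2 ≤ h ≤ k, and let W_1, …, W_N be pairwise distinct h-dimensional F_q-subspaces of F_q^k such that W_1 ∪ … ∪ W_N is a strong blocking set in F_q^k. Then N ≥ min{ ⌊(k−1)/h⌋ + ⌊(k−2)/(h−1)⌋ + 1, q+1 }. -/

import Mathlib

open Module Submodule

/-- Finrank lower bound for a finite infimum of submodules. -/
lemma aux_inf_finrank {K D : Type*} [Field K] [AddCommGroup D] [Module K D]
    [FiniteDimensional K D] {ι : Type*} [DecidableEq ι] (s : Finset ι)
    (G : ι → Submodule K D) (c : ℕ)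
    (hG : ∀ i ∈ s, finrank K D ≤ finrank K ↥(G i) + c) :
    finrank K D ≤ finrank K ↥(s.inf G) + s.card * c := by
  induction s using Finset.cons_induction with
  | empty => rw [Finset.inf_empty]; simp [finrank_top]
  | cons j s hj ih =>
    have ihs := ih (fun i hi => hG i (Finset.mem_cons.mpr (Or.inr hi)))
    have hGj := hG j (Finset.mem_cons_self j s)
    have key := Submodule.finrank_sup_add_finrank_inf_eq (G j) (s.inf G)
    have hle := Submodule.finrank_le ((G j) ⊔ s.inf G)
    rw [Finset.inf_cons, Finset.card_cons, add_mul, one_mul]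
    omega

/-- If `ker f ≤ ker g` for functionals and `f y ≠ 0`, then `g` is a multiple of `f`. -/
lemma aux_ker_le {K M : Type*} [Field K] [AddCommGroup M] [Module K M]
    (f g : M →ₗ[K] K) (h : LinearMap.ker f ≤ LinearMap.ker g) (y : M) (hy : f y ≠ 0) :
    g = (g y * (f y)⁻¹) • f := by
  ext x
  have hx : x - (f x * (f y)⁻¹) • y ∈ LinearMap.ker f := by
    simp only [LinearMap.mem_ker, map_sub, map_smul, smul_eq_mul]
    field_simp
    ring
  have hgx := h hx
  simp only [LinearMap.mem_ker, map_sub, map_smul, smul_eq_mul, sub_eq_zero] at hgx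
  simp only [LinearMap.smul_apply, smul_eq_mul]
  rw [hgx]; ring

/-- The number of pairwise distinct `h`-dimensional subspaces of `F_q^k` whose union is a
strong blocking set is at least `min (⌊(k-1)/h⌋ + ⌊(k-2)/(h-1)⌋ + 1) (q+1)`. -/
theorem stmt_6 (q k h N : ℕ) (hq : IsPrimePow q) (hk : 2 ≤ k) (hh1 : 2 ≤ h) (hhk : h ≤ k)
    (F : Type) [Field F] [Fintype F] (hcard : Fintype.card F = q)
    (W : Fin N → Submodule F (Fin k → F))
    (hdim : ∀ i, Module.finrank F (W i) = h)
    (hdistinct : Function.Injective W)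
    (hSBS : ∀ H : Submodule F (Fin k → F), Module.finrank F H = k - 1 →
      Submodule.span F ((⋃ i, (W i : Set (Fin k → F))) ∩ (H : Set (Fin k → F))) = H) :
    min ((k - 1) / h + (k - 2) / (h - 1) + 1) (q + 1) ≤ N := by
  classical
  set V := Fin k → F
  set a := (k - 1) / h with ha
  set b := (k - 2) / (h - 1) with hb
  -- reduce to the case N ≤ q and N ≤ a + b
  rcases le_or_gt (q + 1) N with hqN | hqN
  · exact le_trans (min_le_right _ _) hqN
  rcases le_or_gt (a + b + 1) N with habN | habN
  · exact le_trans (min_le_left _ _) habN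
  exfalso
  have hNq : N ≤ q := by omega
  have hNab : N ≤ a + b := by omega
  have hV : finrank F V = k := Module.finrank_fin_fun F
  have hDual : finrank F (Module.Dual F V) = k := by
    rw [Subspace.dual_finrank_eq, hV]
  -- annihilators
  set U : Fin N → Submodule F (Module.Dual F V) := fun i => (W i).dualAnnihilator with hU
  have hUdim : ∀ i, finrank F (U i) + h = k := by
    intro i
    have h1 : finrank F (U i) = finrank F (V ⧸ (W i)) :=
      (LinearEquiv.finrank_eq (Subspace.quotEquivAnnihilator (W i))).symm
    have h2 : finrank F (V ⧸ (W i)) + finrank F (W i) = finrank F V :=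
      Submodule.finrank_quotient_add_finrank (W i)
    have h3 := hdim i
    rw [h1]
    omega
  have hah : a * h ≤ k - 1 := Nat.div_mul_le_self _ _
  have hbh : b * (h - 1) ≤ k - 2 := Nat.div_mul_le_self _ _
  -- first functional φ₁
  set sA : Finset (Fin N) := Finset.univ.filter (fun i => i.val < a) with hsA
  have hsAcard : sA.card ≤ a := by
    have : sA.card ≤ (Finset.range a).card := by
      apply Finset.card_le_card_of_injOn (fun i => i.val)
      · intro i hi
        simp only [hsA, Finset.mem_coe, Finset.mem_filter] at hi
        simp [hi.2]
      · intro i _ j _ hij; exact Fin.ext hij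
    simpa using this
  have hinfA : finrank F ↥(sA.inf U) ≥ 1 := by
    have := aux_inf_finrank sA U h (fun i _ => by have := hUdim i; omega)
    have h2 : sA.card * h ≤ a * h := Nat.mul_le_mul_right h hsAcard
    omega
  have : (sA.inf U) ≠ ⊥ := by
    intro hbot
    rw [hbot] at hinfA
    simp at hinfA
  obtain ⟨φ₁, hφ₁mem, hφ₁ne⟩ := Submodule.exists_mem_ne_zero_of_ne_bot this
  -- second functional φ₂
  set G : Fin N → Submodule F (Module.Dual F V) := fun i =>
    if φ₁ ∈ U i then ⊤ else U i ⊔ span F {φ₁} with hG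
  set sB : Finset (Fin N) := Finset.univ.filter (fun i => a ≤ i.val) with hsB
  have hsBcard : sB.card ≤ b := by
    have : sB.card ≤ (Finset.range b).card := by
      apply Finset.card_le_card_of_injOn (fun i => i.val - a)
      · intro i hi
        simp only [hsB, Finset.mem_coe, Finset.mem_filter] at hi
        have := i.isLt
        simp only [Finset.mem_coe, Finset.mem_range]
        omega
      · intro i hi j hj hij
        simp only [hsB, Finset.mem_filter, Finset.mem_coe] at hi hj
        have := i.isLt; have := j.isLt
        apply Fin.ext
        simp only at hij
        omega
    simpa using this
  have hGdim : ∀ i ∈ sB, finrank F (Module.Dual F V) ≤ finrank F (G i) + (h - 1) := by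
    intro i _
    rw [hDual]
    by_cases hmem : φ₁ ∈ U i
    · have hGi : G i = ⊤ := by rw [hG]; simp only [if_pos hmem]
      rw [hGi, finrank_top]
      omega
    · have hGi : G i = U i ⊔ span F {φ₁} := by rw [hG]; simp only [if_neg hmem]
      rw [hGi]
      have hdisj : U i ⊓ span F {φ₁} = ⊥ := by
        apply eq_bot_iff.mpr
        intro x hx
        obtain ⟨hx1, hx2⟩ := Submodule.mem_inf.mp hx
        rw [Submodule.mem_span_singleton] at hx2
        obtain ⟨c, rfl⟩ := hx2
        rcases eq_or_ne c 0 with rfl | hc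
        · simp
        · exfalso; apply hmem
          have : c⁻¹ • (c • φ₁) ∈ U i := Submodule.smul_mem _ _ hx1
          rwa [smul_smul, inv_mul_cancel₀ hc, one_smul] at this
      have key := Submodule.finrank_sup_add_finrank_inf_eq (U i) (span F {φ₁})
      rw [hdisj] at key
      simp only [finrank_bot, add_zero] at key
      rw [finrank_span_singleton hφ₁ne] at key
      have := hUdim i
      omega
  have hinfB : 2 ≤ finrank F ↥(sB.inf G) := by
    have := aux_inf_finrank sB G (h - 1) hGdim
    have h2 : sB.card * (h - 1) ≤ b * (h - 1) := Nat.mul_le_mul_right _ hsBcard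
    omega
  have hYnotle : ¬ (sB.inf G ≤ span F {φ₁}) := by
    intro hle
    have h1 : finrank F ↥(sB.inf G) ≤ finrank F (span F {φ₁}) := Submodule.finrank_mono hle
    rw [finrank_span_singleton hφ₁ne] at h1
    omega
  obtain ⟨φ₂, hφ₂mem, hφ₂span⟩ := SetLike.not_le_iff_exists.mp hYnotle
  -- for each i, a nonzero pair (aᵢ, bᵢ) with aᵢ•φ₁ + bᵢ•φ₂ ∈ U i
  have hpair : ∀ i : Fin N, ∃ p : F × F, (p.1 ≠ 0 ∨ p.2 ≠ 0) ∧ p.1 • φ₁ + p.2 • φ₂ ∈ U i := by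
    intro i
    by_cases hφ₁U : φ₁ ∈ U i
    · exact ⟨(1, 0), Or.inl one_ne_zero, by simpa using hφ₁U⟩
    · have hiB : i ∈ sB := by
        simp only [hsB, Finset.mem_filter, Finset.mem_univ, true_and]
        by_contra hlt
        push_neg at hlt
        have hle : sA.inf U ≤ U i := Finset.inf_le (by simp [hsA, hlt])
        exact hφ₁U (hle hφ₁mem)
      have hφ₂G : φ₂ ∈ G i := by
        have hle : sB.inf G ≤ G i := Finset.inf_le hiB
        exact hle hφ₂mem
      rw [hG] at hφ₂G
      simp only [if_neg hφ₁U] at hφ₂G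
      obtain ⟨u, hu, z, hz, huz⟩ := Submodule.mem_sup.mp hφ₂G
      rw [Submodule.mem_span_singleton] at hz
      obtain ⟨c, rfl⟩ := hz
      refine ⟨(-c, 1), Or.inr one_ne_zero, ?_⟩
      have : (-c) • φ₁ + (1 : F) • φ₂ = u := by
        rw [one_smul, ← huz]; module
      rwa [this]
    -- pigeonhole over slopes
  choose p hpne hpU using hpair
  set slope : Fin N → Option F := fun i => if (p i).2 = 0 then none else some ((p i).1 * ((p i).2)⁻¹)
    with hslope
  have hnotsurj : ¬ Function.Surjective slope := by
    intro hs
    have := Fintype.card_le_of_surjective slope hs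
    simp only [Fintype.card_option, Fintype.card_fin, hcard] at this
    omega
  rw [Function.Surjective] at hnotsurj
  push_neg at hnotsurj
  obtain ⟨s, hsl⟩ := hnotsurj
  -- the good direction (α, β)
  have key : ∃ α β : F, (α • φ₁ + β • φ₂ ≠ 0) ∧ ∀ i, α * (p i).2 - β * (p i).1 ≠ 0 := by
    match s, hsl with
    | none, hsl =>
      refine ⟨1, 0, ?_, ?_⟩
      · simpa using hφ₁ne
      · intro i
        have hi := hsl i
        have hbne : (p i).2 ≠ 0 := fun hb0 => hi (by simp [hslope, hb0])
        simpa using hbne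
    | some c, hsl =>
      refine ⟨c, 1, ?_, ?_⟩
      · intro h0
        apply hφ₂span
        rw [one_smul] at h0
        have h2 : φ₂ = -(c • φ₁) := eq_neg_of_add_eq_zero_right h0
        rw [h2]
        exact Submodule.neg_mem _ (Submodule.smul_mem _ _ (Submodule.mem_span_singleton_self φ₁))
      · intro i
        have hi := hsl i
        rcases eq_or_ne (p i).2 0 with hb0 | hbne
        · have hane : (p i).1 ≠ 0 := by
            rcases hpne i with h' | h'
            · exact h'
            · exact absurd hb0 h'
          simp [hb0, hane]
        · have hne : (p i).1 * ((p i).2)⁻¹ ≠ c := fun heq => hi (by simp [hslope, hbne, heq])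
          intro heq
          apply hne
          field_simp
          linear_combination -heq
  obtain ⟨α, β, hψne0, hdet⟩ := key
  set ψ : Module.Dual F V := α • φ₁ + β • φ₂ with hψ
  have hψne : ψ ≠ 0 := hψne0
  have hkerrank : ∀ (f : Module.Dual F V), f ≠ 0 → finrank F (LinearMap.ker f) = k - 1 := by
    intro f hf
    have hr : LinearMap.range f = ⊤ := by
      rw [LinearMap.range_eq_top]
      obtain ⟨x, hx⟩ := DFunLike.ne_iff.mp hf
      have hx' : f x ≠ 0 := by simpa using hx
      intro c
      refine ⟨(c * (f x)⁻¹) • x, ?_⟩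
      simp only [map_smul, smul_eq_mul]
      field_simp
    have := LinearMap.finrank_range_add_finrank_ker f
    rw [hr, finrank_top, hV, Module.finrank_self] at this
    omega
  set H : Submodule F V := LinearMap.ker ψ with hH
  have hHrank : finrank F H = k - 1 := hkerrank ψ hψne
  have hspan := hSBS H hHrank
  -- the span is inside ker φ₁ ⊓ ker φ₂
  have hZle : H ≤ LinearMap.ker φ₁ ⊓ LinearMap.ker φ₂ := by
    rw [← hspan]
    apply Submodule.span_le.mpr
    rintro x ⟨hxB, hxH⟩
    obtain ⟨_, ⟨i, rfl⟩, hxW⟩ := hxB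
    have e1 : (p i).1 * φ₁ x + (p i).2 * φ₂ x = 0 := by
      have := (Submodule.mem_dualAnnihilator _).mp (hpU i) x hxW
      simpa using this
    have e2 : α * φ₁ x + β * φ₂ x = 0 := by
      have : ψ x = 0 := hxH
      simpa [hψ] using this
    have hd := hdet i
    constructor
    · show φ₁ x = 0
      have : (α * (p i).2 - β * (p i).1) * φ₁ x =
          (p i).2 * (α * φ₁ x + β * φ₂ x) - β * ((p i).1 * φ₁ x + (p i).2 * φ₂ x) := by ring
      rw [e1, e2] at this
      simp only [mul_zero, sub_zero] at this
      exact (mul_eq_zero.mp this).resolve_left hd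
    · show φ₂ x = 0
      have : (α * (p i).2 - β * (p i).1) * φ₂ x =
          α * ((p i).1 * φ₁ x + (p i).2 * φ₂ x) - (p i).1 * (α * φ₁ x + β * φ₂ x) := by ring
      rw [e1, e2] at this
      simp only [mul_zero, sub_zero] at this
      exact (mul_eq_zero.mp this).resolve_left hd
  -- conclude: ker φ₁ = H ≤ ker φ₂, so φ₂ ∈ span {φ₁}
  have hker1 : finrank F (LinearMap.ker φ₁) = k - 1 := hkerrank φ₁ hφ₁ne
  have hHeq : H = LinearMap.ker φ₁ :=
    Submodule.eq_of_le_of_finrank_le (le_trans hZle inf_le_left) (by omega)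
  have hker12 : LinearMap.ker φ₁ ≤ LinearMap.ker φ₂ := hHeq ▸ le_trans hZle inf_le_right
  obtain ⟨y, hy⟩ := DFunLike.ne_iff.mp hφ₁ne
  have := aux_ker_le φ₁ φ₂ hker12 y (by simpa using hy)
  exact hφ₂span (this ▸ Submodule.smul_mem _ _ (Submodule.mem_span_singleton_self φ₁))
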